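/- Let a_1,…,a_m ∈ ℝ^r with ∑_i a_i = 0, let δ ∈ ℝ^m, and define b_0 = (1/m)·1_mᵀδ - (1/(2m²))·(1_mᵀ D 1_m) and b = (1/2)·J_m·(δ_0 - δ), where D_{ij} = ‖a_i - a_j‖² and δ_0 = (1/m)·D·1_m. Then for every x ∈ ℝ^r, (1/m)·∑_{i=1}^m (‖x - a_i‖² - δ_i)² = (‖x‖² - b_0)² + (4/m)·∑_{i=1}^m (⟨a_i, x⟩ - b_i)². -/

import Mathlib

open Matrix Finset

theorem ls_as_weighted_tlmds (r m : ℕ) (hm : 1 ≤ m)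
    (a : Fin m → Fin r → ℝ)
    (hcenter : ∑ i, a i = 0)
    (δ : Fin m → ℝ)
    (D : Fin m → Fin m → ℝ)
    (hD : ∀ i j, D i j = ∑ k, (a i k - a j k) ^ 2)
    (δ₀ : Fin m → ℝ)
    (hδ₀ : ∀ i, δ₀ i = (1 / (m : ℝ)) * ∑ j, D i j)
    (b₀ : ℝ)
    (hb₀ : b₀ = (1 / (m : ℝ)) * (∑ i, δ i) -
      (1 / (2 * (m : ℝ) ^ 2)) * (∑ i, ∑ j, D i j))
    (J : Matrix (Fin m) (Fin m) ℝ)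
    (hJ : J = (1 : Matrix (Fin m) (Fin m) ℝ) -
      ((m : ℝ)⁻¹) • (Matrix.of fun _ _ => (1 : ℝ)))
    (b : Fin m → ℝ)
    (hb : b = (1 / 2 : ℝ) • J.mulVec (δ₀ - δ)) :
    ∀ x : Fin r → ℝ,
      (1 / (m : ℝ)) * ∑ i, ((∑ k, (x k - a i k) ^ 2) - δ i) ^ 2 =
      ((∑ k, (x k) ^ 2) - b₀) ^ 2 +
        (4 / (m : ℝ)) * ∑ i, ((∑ k, a i k * x k) - b i) ^ 2 := by
  intro x
  have hm' : (m : ℝ) ≠ 0 := by positivity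
  set Q : ℝ := ∑ i, ∑ k, (a i k) ^ 2 with hQ
  set s : ℝ := ∑ k, (x k) ^ 2 with hs
  have hc : ∀ k, ∑ j, a j k = 0 := by
    intro k
    have := congrFun hcenter k
    simpa using this
  -- row sums of D
  have hDrow : ∀ i, ∑ j, D i j = m * (∑ k, (a i k) ^ 2) + Q := by
    intro i
    have : ∑ j, D i j = ∑ j, ∑ k, ((a i k)^2 - 2 * (a i k * a j k) + (a j k)^2) := by
      refine Finset.sum_congr rfl fun j _ => ?_
      rw [hD]
      exact Finset.sum_congr rfl fun k _ => by ring
    rw [this]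
    rw [Finset.sum_comm]
    have : ∀ k, ∑ j, ((a i k)^2 - 2 * (a i k * a j k) + (a j k)^2)
        = m * (a i k)^2 + ∑ j, (a j k)^2 := by
      intro k
      have h1 : ∑ j, 2 * (a i k * a j k) = 2 * (a i k * ∑ j, a j k) := by
        rw [Finset.mul_sum, Finset.mul_sum]
      rw [Finset.sum_add_distrib, Finset.sum_sub_distrib, Finset.sum_const,
        Finset.card_univ, Fintype.card_fin, nsmul_eq_mul, h1, hc k]
      ring
    rw [Finset.sum_congr rfl fun k _ => this k, Finset.sum_add_distrib,
      ← Finset.mul_sum, Finset.sum_comm]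
  have hsumD : ∑ i, ∑ j, D i j = 2 * m * Q := by
    rw [Finset.sum_congr rfl fun i _ => hDrow i, Finset.sum_add_distrib,
      ← Finset.mul_sum, Finset.sum_const]
    simp [hQ]
    ring
  have hδ₀' : ∀ i, δ₀ i = (∑ k, (a i k) ^ 2) + Q / m := by
    intro i
    rw [hδ₀, hDrow]
    field_simp
  have hb₀' : b₀ = (1 / m) * (∑ i, δ i) - Q / m := by
    rw [hb₀, hsumD]
    field_simp
  -- formula for b
  have hbi : ∀ i, b i = (1/2) * ((∑ k, (a i k) ^ 2) - δ i + b₀) := by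
    intro i
    rw [hb]
    simp only [Pi.smul_apply, smul_eq_mul, hJ, Matrix.sub_mulVec, Matrix.one_mulVec,
      Matrix.smul_mulVec, Pi.sub_apply, Pi.smul_apply, smul_eq_mul,
      Matrix.mulVec, dotProduct, Matrix.of_apply, one_mul]
    have hsv : ∑ j, (δ₀ j - δ j) = Q - m * b₀ := by
      rw [Finset.sum_sub_distrib, Finset.sum_congr rfl fun j _ => hδ₀' j,
        Finset.sum_add_distrib, Finset.sum_const, Finset.card_univ,
        Fintype.card_fin, nsmul_eq_mul, hb₀']
      field_simp
      ring
    rw [hsv, hδ₀' i]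
    field_simp
    ring
  have hsumb : ∑ i, b i = 0 := by
    rw [Finset.sum_congr rfl fun i _ => hbi i, ← Finset.mul_sum]
    rw [Finset.sum_add_distrib, Finset.sum_sub_distrib, Finset.sum_const,
      Finset.card_univ, Fintype.card_fin, nsmul_eq_mul, hb₀']
    field_simp
    rw [hQ]; ring
  have hsump : ∑ i, ∑ k, a i k * x k = 0 := by
    rw [Finset.sum_comm]
    have : ∀ k, ∑ i, a i k * x k = 0 := by
      intro k
      rw [← Finset.sum_mul, hc k, zero_mul]
    simp [this]
  have hnorm : ∀ i, ∑ k, (x k - a i k) ^ 2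
      = s - 2 * (∑ k, a i k * x k) + ∑ k, (a i k) ^ 2 := by
    intro i
    rw [hs, Finset.mul_sum, ← Finset.sum_sub_distrib, ← Finset.sum_add_distrib]
    exact Finset.sum_congr rfl fun k _ => by ring
  -- rewrite each summand
  have key : ∀ i, ((∑ k, (x k - a i k) ^ 2) - δ i) ^ 2
      = (s - b₀)^2 - 4 * (s - b₀) * ((∑ k, a i k * x k) - b i)
        + 4 * ((∑ k, a i k * x k) - b i)^2 := by
    intro i
    rw [hnorm i]
    have h2b : (∑ k, (a i k) ^ 2) - δ i = 2 * b i - b₀ := by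
      rw [hbi i]; ring
    have : s - 2 * (∑ k, a i k * x k) + ∑ k, (a i k) ^ 2 - δ i
        = (s - b₀) - 2 * ((∑ k, a i k * x k) - b i) := by
      have : s - 2 * (∑ k, a i k * x k) + ((∑ k, (a i k) ^ 2) - δ i)
          = s - 2 * (∑ k, a i k * x k) + (2 * b i - b₀) := by rw [h2b]
      linarith [this]
    rw [show s - 2 * (∑ k, a i k * x k) + (∑ k, (a i k) ^ 2) - δ i
        = s - 2 * (∑ k, a i k * x k) + ((∑ k, (a i k) ^ 2)) - δ i from rfl, this]
    ring
  rw [Finset.sum_congr rfl fun i _ => key i]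
  rw [Finset.sum_add_distrib, Finset.sum_sub_distrib, Finset.sum_const,
    ← Finset.mul_sum, ← Finset.mul_sum, Finset.sum_sub_distrib, hsump, hsumb]
  simp only [sub_zero, zero_sub, mul_zero, smul_eq_mul, nsmul_eq_mul]
  field_simp
  rw [Finset.card_univ, Fintype.card_fin]
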